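/- Let G and H be finite cyclic groups and k ≥ 3. Then |G|^k ≤ ∑_{φ ∈ Hom(G,H)} |ker(φ)|^k ≤ |G|^k · ζ(k-1)², where ζ(s) = ∏_p (1 - p^{-s})^{-1} is the Riemann zeta function (Euler product over all primes). -/
import Mathlib


/-- For finite cyclic groups `G, H` and `k ≥ 3`,
`|G|^k ≤ ∑_{φ ∈ Hom(G,H)} |ker φ|^k ≤ |G|^k ⋅ ζ(k-1)²`, where
`ζ(s) = ∏_p (1 - p^{-s})⁻¹` is the Riemann zeta function (Euler product over primes). -/
theorem gamma_bounds_cyclic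
    {G H : Type*} [CommGroup G] [CommGroup H] [Fintype G] [Fintype H]
    (hG : IsCyclic G) (hH : IsCyclic H)
    [Fintype (G →* H)] (k : ℕ) (hk : 3 ≤ k) :
    ((Nat.card G : ℝ)) ^ k ≤ (∑ φ : G →* H, ((Nat.card φ.ker : ℝ)) ^ k)
    ∧ (∑ φ : G →* H, ((Nat.card φ.ker : ℝ)) ^ k)
        ≤ ((Nat.card G : ℝ)) ^ k *
            (∏' p : Nat.Primes, (1 - (((p : ℕ) : ℝ) ^ (k - 1))⁻¹)⁻¹) ^ 2 := by
  classical
  have hk1 : 1 < k - 1 := by omega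
  constructor
  · -- lower bound : take the trivial homomorphism
    have h1 : ((Nat.card G : ℝ)) ^ k
        = ((Nat.card (MonoidHom.ker (1 : G →* H)) : ℝ)) ^ k := by
      rw [MonoidHom.ker_one, Subgroup.card_top]
    rw [h1]
    exact Finset.single_le_sum (f := fun φ : G →* H => ((Nat.card φ.ker : ℝ)) ^ k)
      (fun φ _ => by positivity) (Finset.mem_univ 1)
  · -- upper bound
    obtain ⟨g, hg⟩ := hG
    -- the multiplicative function n ↦ n^{-(k-1)}
    set f : ℕ →*₀ ℝ :=
      { toFun := fun n => ((n : ℝ) ^ (k - 1))⁻¹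
        map_zero' := by
          simp [zero_pow (show k - 1 ≠ 0 by omega)]
        map_one' := by simp
        map_mul' := by
          intro a b
          push_cast
          rw [mul_pow, mul_inv] } with hf
    have hfsum : Summable fun n : ℕ => ((n : ℝ) ^ (k - 1))⁻¹ := by
      simpa [one_div] using Real.summable_one_div_nat_pow.mpr hk1
    have hnorm : Summable fun n : ℕ => ‖f n‖ := by
      have : ∀ n : ℕ, ‖f n‖ = ((n : ℝ) ^ (k - 1))⁻¹ := fun n =>
        show ‖((n : ℝ) ^ (k - 1))⁻¹‖ = ((n : ℝ) ^ (k - 1))⁻¹ from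
          Real.norm_of_nonneg (by positivity)
      simpa [this] using hfsum
    have hEuler : (∏' p : Nat.Primes, (1 - (((p : ℕ) : ℝ) ^ (k - 1))⁻¹)⁻¹)
        = ∑' n : ℕ, ((n : ℝ) ^ (k - 1))⁻¹ := by
      simpa [hf] using EulerProduct.eulerProduct_completely_multiplicative_tprod hnorm
    set Z : ℝ := ∑' n : ℕ, ((n : ℝ) ^ (k - 1))⁻¹ with hZ
    have hZ1 : 1 ≤ Z := by
      have := Summable.le_tsum hfsum 1 (fun j _ => by positivity)
      simpa using this
    -- card of kernel in terms of order of image of the generator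
    have hcard : ∀ φ : G →* H, (Nat.card φ.ker) * orderOf (φ g) = Nat.card G := by
      intro φ
      have htop : Subgroup.zpowers g = ⊤ :=
        (Subgroup.eq_top_iff' _).mpr fun x => by
          obtain ⟨m, hm⟩ := hg x
          exact Subgroup.mem_zpowers_iff.mpr ⟨m, hm⟩
      have hr : φ.range = Subgroup.zpowers (φ g) := by
        rw [← MonoidHom.map_zpowers, htop, ← MonoidHom.range_eq_map]
      have := φ.ker.card_mul_index
      rwa [Subgroup.index_ker, hr, Nat.card_zpowers] at this
    have hGpos : 0 < Nat.card G := Nat.card_pos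
    -- bound each term
    have hterm : ∀ φ : G →* H, ((Nat.card φ.ker : ℝ)) ^ k
        ≤ ((Nat.card G : ℝ)) ^ k * ((orderOf (φ g) : ℝ) ^ k)⁻¹ := by
      intro φ
      have hopos : 0 < orderOf (φ g) := orderOf_pos _
      have : ((Nat.card φ.ker : ℝ)) * (orderOf (φ g) : ℝ) = (Nat.card G : ℝ) := by
        exact_mod_cast congrArg (Nat.cast : ℕ → ℝ) (hcard φ)
      have hker : ((Nat.card φ.ker : ℝ)) = (Nat.card G : ℝ) / (orderOf (φ g) : ℝ) := by
        field_simp at this ⊢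
        linarith [this]
      rw [hker, div_pow]
      rw [div_eq_mul_inv]
    -- sum over φ of 1/ord(φ g)^k ≤ sum over h : H of 1/ord(h)^k
    have hinj : Function.Injective (fun φ : G →* H => φ g) := by
      intro φ ψ h
      ext x
      obtain ⟨m, rfl⟩ := hg x
      simp only at h
      rw [map_zpow, map_zpow, h]
    have hsum1 : (∑ φ : G →* H, ((orderOf (φ g) : ℝ) ^ k)⁻¹)
        ≤ ∑ h : H, ((orderOf h : ℝ) ^ k)⁻¹ := by
      calc (∑ φ : G →* H, ((orderOf (φ g) : ℝ) ^ k)⁻¹)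
          = ∑ h ∈ Finset.univ.image (fun φ : G →* H => φ g),
              ((orderOf h : ℝ) ^ k)⁻¹ :=
            (Finset.sum_image (s := Finset.univ)
              (f := fun h : H => ((orderOf h : ℝ) ^ k)⁻¹)
              (g := fun φ : G →* H => φ g)
              (fun x _ y _ h => hinj h)).symm
        _ ≤ ∑ h : H, ((orderOf h : ℝ) ^ k)⁻¹ :=
            Finset.sum_le_sum_of_subset_of_nonneg (Finset.subset_univ _)
              (fun i _ _ => by positivity)
    -- group elements of H by their order
    have hsum2 : (∑ h : H, ((orderOf h : ℝ) ^ k)⁻¹) ≤ Z := by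
      rw [Finset.sum_comp (fun d : ℕ => ((d : ℝ) ^ k)⁻¹) (fun h : H => orderOf h)]
      have hstep : ∀ d ∈ Finset.univ.image (fun h : H => orderOf h),
          ({h : H | orderOf h = d} : Finset H).card • ((d : ℝ) ^ k)⁻¹
            ≤ ((d : ℝ) ^ (k - 1))⁻¹ := by
        intro d hd
        obtain ⟨h, _, rfl⟩ := Finset.mem_image.mp hd
        have hdpos : 0 < orderOf h := orderOf_pos _
        set d := orderOf h
        have hdvd : d ∣ Fintype.card H := orderOf_dvd_card
        have hcard_le : ({x : H | orderOf x = d} : Finset H).card ≤ d := by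
          rw [IsCyclic.card_orderOf_eq_totient hdvd]
          exact Nat.totient_le d
        calc ({x : H | orderOf x = d} : Finset H).card • ((d : ℝ) ^ k)⁻¹
            ≤ (d : ℝ) * ((d : ℝ) ^ k)⁻¹ := by
              rw [nsmul_eq_mul]
              apply mul_le_mul_of_nonneg_right _ (by positivity)
              exact_mod_cast hcard_le
          _ = ((d : ℝ) ^ (k - 1))⁻¹ := by
              have : (d : ℝ) ^ k = (d : ℝ) * (d : ℝ) ^ (k - 1) := by
                rw [← pow_succ']
                congr 1
                omega
              rw [this, mul_inv]
              have hd0 : (d : ℝ) ≠ 0 := by positivity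
              field_simp
      calc (∑ d ∈ Finset.univ.image (fun h : H => orderOf h),
            ({h : H | orderOf h = d} : Finset H).card • ((d : ℝ) ^ k)⁻¹)
          ≤ ∑ d ∈ Finset.univ.image (fun h : H => orderOf h), ((d : ℝ) ^ (k - 1))⁻¹ :=
            Finset.sum_le_sum hstep
        _ ≤ Z := Summable.sum_le_tsum _ (fun i _ => by positivity) hfsum
    rw [hEuler]
    calc (∑ φ : G →* H, ((Nat.card φ.ker : ℝ)) ^ k)
        ≤ ∑ φ : G →* H, ((Nat.card G : ℝ)) ^ k * ((orderOf (φ g) : ℝ) ^ k)⁻¹ :=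
          Finset.sum_le_sum (fun φ _ => hterm φ)
      _ = ((Nat.card G : ℝ)) ^ k * ∑ φ : G →* H, ((orderOf (φ g) : ℝ) ^ k)⁻¹ := by
          rw [Finset.mul_sum]
      _ ≤ ((Nat.card G : ℝ)) ^ k * Z :=
          mul_le_mul_of_nonneg_left (hsum1.trans hsum2) (by positivity)
      _ ≤ ((Nat.card G : ℝ)) ^ k * Z ^ 2 :=
          mul_le_mul_of_nonneg_left (by nlinarith) (by positivity)
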